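/- Let h ∈ G be a C²-diffeomorphism of S¹ with h′ > 0 and let g ∈ G be a monotone map of S¹. Then the infinite product Y⁰_h(g) = ∏_{a ∈ J_g} √(h′(g(a−))·h′(g(a+))) / ((h(g(a+))−h(g(a−)))/(g(a+)−g(a−))) over the jump set J_g of g converges absolutely, and |log Y⁰_h(g)| ≤ sup|（log h′)′| uniformly in g. -/

import Mathlib

/-- Monotone maps of `S¹ = ℝ/ℤ`, represented by right-continuous nondecreasing maps
`g : ℝ → ℝ` with `g(x+1) = g(x)+1`. -/
def IsGR (g : ℝ → ℝ) : Prop :=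
  Monotone g ∧ (∀ t : ℝ, ContinuousWithinAt g (Set.Ici t) t) ∧ ∀ x, g (x + 1) = g x + 1

/-- The jump locations of `g` (in one period `[0,1)`). -/
def jumpSet (g : ℝ → ℝ) : Set ℝ :=
  {a | a ∈ Set.Ico (0:ℝ) 1 ∧ Function.leftLim g a ≠ g a}

/-- The factor of the product `Y⁰_h(g)` at a jump location `a`:
`√(h′(g(a−))·h′(g(a+))) / ((h(g(a+))−h(g(a−)))/(g(a+)−g(a−)))`. -/
noncomputable def Yterm (h g : ℝ → ℝ) (a : ℝ) : ℝ :=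
  Real.sqrt (deriv h (Function.leftLim g a) * deriv h (g a)) /
    ((h (g a) - h (Function.leftLim g a)) / (g a - Function.leftLim g a))

open Set Filter Function MeasureTheory Topology ENNReal

/-- The left limit of a `G`-map at `1` equals its left limit at `0` plus `1`. -/
lemma IsGR.leftLim_one {g : ℝ → ℝ} (hg : IsGR g) :
    Function.leftLim g 1 = Function.leftLim g 0 + 1 := by
  have h0 : Tendsto g (𝓝[<] (0:ℝ)) (𝓝 (Function.leftLim g 0)) := hg.1.tendsto_leftLim 0
  have ht : Tendsto (fun x : ℝ => x - 1) (𝓝[<] (1:ℝ)) (𝓝[<] (0:ℝ)) := by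
    apply tendsto_nhdsWithin_of_tendsto_nhds_of_eventually_within
    · have h' : Tendsto (fun x : ℝ => x - 1) (𝓝 (1:ℝ)) (𝓝 ((1:ℝ) - 1)) :=
        (continuous_sub_right (1:ℝ)).tendsto 1
      rw [show (1:ℝ) - 1 = 0 by norm_num] at h'
      exact h'.mono_left nhdsWithin_le_nhds
    · filter_upwards [self_mem_nhdsWithin] with x hx
      have : x < 1 := hx
      simpa [Set.mem_Iio] using sub_neg.2 this
  have h1 : Tendsto (fun x : ℝ => g (x - 1)) (𝓝[<] (1:ℝ)) (𝓝 (Function.leftLim g 0)) :=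
    h0.comp ht
  have h2 : Tendsto g (𝓝[<] (1:ℝ)) (𝓝 (Function.leftLim g 0 + 1)) := by
    have key : ∀ x : ℝ, g (x - 1) + 1 = g x := by
      intro x; have := hg.2.2 (x - 1); rw [← this]; ring_nf
    exact (h1.add_const 1).congr key
  exact leftLim_eq_of_tendsto h2

/-- The sum of the jumps of `g` over any finite subset of the jump set is at most `1`. -/
lemma jump_sum_le {g : ℝ → ℝ} (hg : IsGR g) (u : Finset ℝ) (hu : ↑u ⊆ jumpSet g) :
    ∑ a ∈ u, (g a - Function.leftLim g a) ≤ 1 := by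
  set F : StieltjesFunction ℝ := ⟨g, hg.1, hg.2.1⟩ with hF
  have hFg : (F : ℝ → ℝ) = g := rfl
  have hsing : ∀ a : ℝ, F.measure {a} = ENNReal.ofReal (g a - Function.leftLim g a) := by
    intro a; simpa [hFg] using F.measure_singleton a
  have hdisj : (↑u : Set ℝ).PairwiseDisjoint (fun a => ({a} : Set ℝ)) := by
    intro a _ b _ hab
    simp [Set.disjoint_singleton, hab]
  have hsum : ∑ a ∈ u, F.measure {a} = F.measure (⋃ a ∈ u, ({a} : Set ℝ)) :=
    (measure_biUnion_finset hdisj fun a _ => measurableSet_singleton a).symm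
  have hsub : (⋃ a ∈ u, ({a} : Set ℝ)) ⊆ Set.Ico (0:ℝ) 1 := by
    intro x hx
    simp only [Set.mem_iUnion, Set.mem_singleton_iff] at hx
    obtain ⟨a, ha, rfl⟩ := hx
    exact (hu ha).1
  have hIco : F.measure (Set.Ico (0:ℝ) 1) = 1 := by
    rw [F.measure_Ico]
    have : Function.leftLim g 1 - Function.leftLim g 0 = 1 := by
      rw [hg.leftLim_one]; ring
    simp [hFg, this]
  have hle : ∑ a ∈ u, F.measure {a} ≤ 1 := by
    rw [hsum, ← hIco]
    exact measure_mono hsub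
  have hnonneg : ∀ a ∈ u, (0:ℝ) ≤ g a - Function.leftLim g a := fun a _ =>
    sub_nonneg.2 (hg.1.leftLim_le le_rfl)
  calc ∑ a ∈ u, (g a - Function.leftLim g a)
      = (∑ a ∈ u, F.measure {a}).toReal := by
        rw [ENNReal.toReal_sum (fun a _ => by simp [hsing a])]
        exact (Finset.sum_congr rfl fun a ha => by
          rw [hsing a, ENNReal.toReal_ofReal (hnonneg a ha)]).symm
    _ ≤ (1 : ℝ≥0∞).toReal := ENNReal.toReal_mono (by simp) hle
    _ = 1 := by simp

/-- The jumps of `g` are summable over the jump set, with total at most `1`. -/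
lemma jump_summable {g : ℝ → ℝ} (hg : IsGR g) :
    Summable (fun a : jumpSet g => g ↑a - Function.leftLim g ↑a) ∧
    ∑' a : jumpSet g, (g ↑a - Function.leftLim g ↑a) ≤ 1 := by
  have key : ∀ u : Finset (jumpSet g), ∑ a ∈ u, (g ↑a - Function.leftLim g ↑a) ≤ 1 := by
    intro u
    have h1 : ↑(u.image Subtype.val) ⊆ jumpSet g := by
      intro x hx
      simp only [Finset.coe_image, Set.mem_image, Finset.mem_coe] at hx
      obtain ⟨⟨a, ha⟩, _, rfl⟩ := hx
      exact ha
    have := jump_sum_le hg (u.image Subtype.val) h1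
    rwa [Finset.sum_image (fun a _ b _ h => Subtype.ext h)] at this
  have hnn : 0 ≤ fun a : jumpSet g => g ↑a - Function.leftLim g ↑a := fun a =>
    sub_nonneg.2 (hg.1.leftLim_le le_rfl)
  have hs := summable_of_sum_le hnn key
  exact ⟨hs, hs.tsum_le_of_sum_le key⟩

/-- For a `C²`-diffeomorphism `h` of `S¹` with `h′ > 0` and a monotone map `g` of `S¹`,
the infinite product defining `Y⁰_h(g)` converges absolutely, and
`|log Y⁰_h(g)| ≤ sup |(log h′)′|`, uniformly in `g`. -/
theorem Yzero_product_converges (g h : ℝ → ℝ)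
    (hg : IsGR g) (hh : IsGR h) (hh2 : ContDiff ℝ 2 h) (hh' : ∀ x, 0 < deriv h x) :
    Summable (fun a : jumpSet g => Real.log (Yterm h g a)) ∧
    Summable (fun a : jumpSet g => |Real.log (Yterm h g a)|) ∧
    |∑' a : jumpSet g, Real.log (Yterm h g a)| ≤
      ⨆ x : ℝ, |deriv (fun y => Real.log (deriv h y)) x| := by
  obtain ⟨hjsum, hjtsum⟩ := jump_summable hg
  set ψ : ℝ → ℝ := fun y => Real.log (deriv h y) with hψdef
  set L : ℝ := ⨆ x : ℝ, |deriv ψ x| with hLdef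
  -- differentiability facts
  have hdh1 : ContDiff ℝ 1 (deriv h) := by
    have h21 : (2 : WithTop ℕ∞) = 1 + 1 := by norm_num
    rw [h21, contDiff_succ_iff_deriv] at hh2
    exact hh2.2.2
  have hdh : Differentiable ℝ (deriv h) := hdh1.differentiable one_ne_zero
  have hcont1 : Continuous (deriv h) := hdh.continuous
  have hcont2 : Continuous (deriv (deriv h)) := (contDiff_one_iff_deriv.1 hdh1).2
  have hhdiff : Differentiable ℝ h := by
    exact hh2.differentiable (by norm_num)
  -- derivative of ψ
  have hψhas : ∀ x, HasDerivAt ψ ((deriv h x)⁻¹ * deriv (deriv h) x) x := fun x =>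
    (Real.hasDerivAt_log (hh' x).ne').comp x (hdh x).hasDerivAt
  have hψderiv : ∀ x, deriv ψ x = (deriv h x)⁻¹ * deriv (deriv h) x := fun x =>
    (hψhas x).deriv
  -- periodicity of `deriv ψ`
  have hper1 : ∀ x : ℝ, deriv h (x + 1) = deriv h x := by
    intro x
    have e1 : (fun y : ℝ => h (y + 1)) = fun y => h y + 1 := funext fun y => hh.2.2 y
    calc deriv h (x + 1) = deriv (fun y : ℝ => h (y + 1)) x := (deriv_comp_add_const h 1 x).symm
      _ = deriv (fun y : ℝ => h y + 1) x := by rw [e1]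
      _ = deriv h x := by simp
  have hper2 : ∀ x : ℝ, deriv (deriv h) (x + 1) = deriv (deriv h) x := by
    intro x
    have e1 : (fun y : ℝ => deriv h (y + 1)) = deriv h := funext fun y => hper1 y
    calc deriv (deriv h) (x + 1) = deriv (fun y : ℝ => deriv h (y + 1)) x :=
          (deriv_comp_add_const (deriv h) 1 x).symm
      _ = deriv (deriv h) x := by rw [e1]
  have hφper : Function.Periodic (fun x => |deriv ψ x|) 1 := by
    intro x
    show |deriv ψ (x + 1)| = |deriv ψ x|
    rw [hψderiv, hψderiv, hper1, hper2]
  have hφcont : Continuous (fun x => |deriv ψ x|) := by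
    have : Continuous (fun x => (deriv h x)⁻¹ * deriv (deriv h) x) :=
      (hcont1.inv₀ fun x => (hh' x).ne').mul hcont2
    rw [show (fun x => |deriv ψ x|) = fun x => |(deriv h x)⁻¹ * deriv (deriv h) x| from
      funext fun x => by rw [hψderiv]]
    exact this.abs
  have hbdd : BddAbove (Set.range fun x => |deriv ψ x|) := by
    obtain ⟨C, hC⟩ := (isCompact_Icc (a := (0:ℝ)) (b := 1)).bddAbove_image
      hφcont.continuousOn
    refine ⟨C, ?_⟩
    rintro y ⟨x, rfl⟩
    have hmem : x - (⌊x⌋ : ℝ) ∈ Set.Icc (0:ℝ) 1 :=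
      ⟨sub_nonneg.2 (Int.floor_le x), by linarith [Int.lt_floor_add_one x]⟩
    have heq2 : |deriv ψ (x - (⌊x⌋ : ℝ))| = |deriv ψ x| := by
      have := hφper.sub_int_mul_eq (x := x) ⌊x⌋
      simpa using this
    show |deriv ψ x| ≤ C
    rw [← heq2]
    exact hC ⟨x - (⌊x⌋ : ℝ), hmem, rfl⟩
  have hLb : ∀ x, |deriv ψ x| ≤ L := fun x => le_ciSup hbdd x
  have hL0 : (0:ℝ) ≤ L := (abs_nonneg _).trans (hLb 0)
  -- Lipschitz bound for ψ
  have hlip : ∀ x y : ℝ, |ψ y - ψ x| ≤ L * |y - x| := by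
    intro x y
    have := Convex.norm_image_sub_le_of_norm_deriv_le
      (f := ψ) (s := Set.univ) (fun z _ => (hψhas z).differentiableAt)
      (fun z _ => by rw [Real.norm_eq_abs]; exact hLb z) convex_univ (Set.mem_univ x)
      (Set.mem_univ y)
    simpa [Real.norm_eq_abs] using this
  -- termwise bound
  have key : ∀ a : jumpSet g,
      |Real.log (Yterm h g ↑a)| ≤ L * (g ↑a - Function.leftLim g ↑a) := by
    rintro ⟨a, ha01, hane⟩
    set u := Function.leftLim g a with hu
    set v := g a with hv
    have huv : u < v := lt_of_le_of_ne (hg.1.leftLim_le le_rfl) hane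
    obtain ⟨ξ, hξ, hξeq⟩ := exists_hasDerivAt_eq_slope h (deriv h) huv
      (hhdiff.continuous.continuousOn) (fun x _ => (hhdiff x).hasDerivAt)
    have hYlog : Real.log (Yterm h g a) = (ψ u + ψ v) / 2 - ψ ξ := by
      have hprodpos : 0 < deriv h u * deriv h v := mul_pos (hh' u) (hh' v)
      have hsqrt_ne : Real.sqrt (deriv h u * deriv h v) ≠ 0 :=
        (Real.sqrt_pos.2 hprodpos).ne'
      have hslope : (h v - h u) / (v - u) = deriv h ξ := hξeq.symm
      unfold Yterm
      rw [← hu, ← hv, hslope, Real.log_div hsqrt_ne (hh' ξ).ne',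
        Real.log_sqrt hprodpos.le, Real.log_mul (hh' u).ne' (hh' v).ne']
    have h1 : |ψ u - ψ ξ| ≤ L * (ξ - u) := by
      have := hlip ξ u
      rwa [abs_of_neg (by linarith [hξ.1] : u - ξ < 0), neg_sub] at this
    have h2 : |ψ v - ψ ξ| ≤ L * (v - ξ) := by
      have := hlip ξ v
      rwa [abs_of_pos (by linarith [hξ.2] : (0:ℝ) < v - ξ)] at this
    have habs : |Real.log (Yterm h g a)| ≤ (|ψ u - ψ ξ| + |ψ v - ψ ξ|) / 2 := by
      rw [hYlog, show (ψ u + ψ v) / 2 - ψ ξ = ((ψ u - ψ ξ) + (ψ v - ψ ξ)) / 2 by ring,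
        abs_div, abs_two]
      gcongr
      exact abs_add_le _ _
    show |Real.log (Yterm h g a)| ≤ L * (g a - Function.leftLim g a)
    calc |Real.log (Yterm h g a)| ≤ (|ψ u - ψ ξ| + |ψ v - ψ ξ|) / 2 := habs
      _ ≤ (L * (ξ - u) + L * (v - ξ)) / 2 := by gcongr
      _ = L * (v - u) / 2 := by ring
      _ ≤ L * (v - u) := half_le_self (mul_nonneg hL0 (by linarith))
  -- summability and the final bound
  have habsSum : Summable (fun a : jumpSet g => |Real.log (Yterm h g a)|) :=
    Summable.of_nonneg_of_le (fun a => abs_nonneg _) key (hjsum.mul_left L)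
  have hsum : Summable (fun a : jumpSet g => Real.log (Yterm h g a)) := habsSum.of_abs
  refine ⟨hsum, habsSum, ?_⟩
  have h1 : |∑' a : jumpSet g, Real.log (Yterm h g a)| ≤
      ∑' a : jumpSet g, |Real.log (Yterm h g a)| := by
    simpa [Real.norm_eq_abs] using
      norm_tsum_le_tsum_norm (f := fun a : jumpSet g => Real.log (Yterm h g a))
        (by simpa [Real.norm_eq_abs] using habsSum)
  have h2 : ∑' a : jumpSet g, |Real.log (Yterm h g a)| ≤
      ∑' a : jumpSet g, L * (g ↑a - Function.leftLim g ↑a) :=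
    Summable.tsum_le_tsum key habsSum (hjsum.mul_left L)
  have h3 : ∑' a : jumpSet g, L * (g ↑a - Function.leftLim g ↑a) =
      L * ∑' a : jumpSet g, (g ↑a - Function.leftLim g ↑a) := tsum_mul_left
  have h4 : L * ∑' a : jumpSet g, (g ↑a - Function.leftLim g ↑a) ≤ L * 1 :=
    mul_le_mul_of_nonneg_left hjtsum hL0
  have h2' : ∑' a : jumpSet g, |Real.log (Yterm h g a)| ≤
      L * ∑' a : jumpSet g, (g ↑a - Function.leftLim g ↑a) := h3 ▸ h2
  linarith
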